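/- Let n ≥ 3 and 2 ≤ k ≤ n with 2k ≥ n. Let Λ = (λ_1,…,λ_n) ∈ ℝ^n and suppose that A_Λ ∈ Γ̄_k^+. Then min_{1 ≤ i ≤ n} λ_i ≥ ((2k−n)(n−1)/((n−2)(k−1))) · C(n,k)^{−1/k} · σ_k(A_Λ)^{1/k}, where C(n,k) is the binomial coefficient. -/

import Mathlib

/-- The `k`-th elementary symmetric polynomial of `x : Fin n → ℝ`. -/
noncomputable def sigmaElem (n k : ℕ) (x : Fin n → ℝ) : ℝ :=
  ∑ s ∈ Finset.univ.powersetCard k, ∏ i ∈ s, x i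

/-- The Gårding cone `Γ_k^+ ⊆ ℝ^n`: the connected component of
`{σ_k > 0}` containing `(1, …, 1)`. -/
def GammaPlus (n k : ℕ) : Set (Fin n → ℝ) :=
  connectedComponentIn {x | 0 < sigmaElem n k x} (fun _ => 1)

/-- `A_Λ = Λ − (Σ_i λ_i / (2(n−1))) · (1,…,1)`. -/
noncomputable def ALam (n : ℕ) (Λ : Fin n → ℝ) : Fin n → ℝ :=
  fun i => Λ i - (∑ j, Λ j) / (2 * ((n : ℝ) - 1))

namespace MinSigma
open Multiset Polynomial

lemma esymm_zero' (s : Multiset ℝ) : s.esymm 0 = 1 := by simp [Multiset.esymm]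

lemma esymm_of_card_lt {s : Multiset ℝ} {j : ℕ} (h : Multiset.card s < j) :
    s.esymm j = 0 := by
  rw [Multiset.esymm, Multiset.powersetCard_eq_empty _ h]; simp

lemma esymm_cons (a : ℝ) (s : Multiset ℝ) (j : ℕ) :
    (a ::ₘ s).esymm (j + 1) = s.esymm (j + 1) + a * s.esymm j := by
  rw [Multiset.esymm, Multiset.powersetCard_cons, Multiset.map_add, Multiset.sum_add,
    Multiset.map_map]
  rw [Multiset.esymm, Multiset.esymm]
  congr 1
  rw [show (Multiset.prod ∘ Multiset.cons a) = (fun t : Multiset ℝ => a * t.prod) by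
    funext t; simp [Multiset.prod_cons]]
  rw [← Multiset.sum_map_mul_left]

-- nonneg for multisets of positive reals
lemma esymm_nonneg {s : Multiset ℝ} (hs : ∀ a ∈ s, 0 < a) (j : ℕ) : 0 ≤ s.esymm j := by
  induction s using Multiset.induction generalizing j with
  | empty =>
    cases j with
    | zero => simp [esymm_zero']
    | succ j => rw [esymm_of_card_lt (by simp)]
  | cons a s ih =>
    cases j with
    | zero => simp [esymm_zero']
    | succ j =>
      rw [esymm_cons]
      have ha : 0 < a := hs a (mem_cons_self a s)
      have hs' : ∀ b ∈ s, 0 < b := fun b hb => hs b (mem_cons_of_mem hb)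
      have := ih hs' (j+1); have := ih hs' j
      positivity

lemma esymm_pos {s : Multiset ℝ} (hs : ∀ a ∈ s, 0 < a) {j : ℕ} (hj : j ≤ Multiset.card s) :
    0 < s.esymm j := by
  induction s using Multiset.induction generalizing j with
  | empty =>
    simp only [Multiset.card_zero, Nat.le_zero] at hj
    subst hj; simp [esymm_zero']
  | cons a s ih =>
    cases j with
    | zero => simp [esymm_zero']
    | succ j =>
      rw [esymm_cons]
      have ha : 0 < a := hs a (mem_cons_self a s)
      have hs' : ∀ b ∈ s, 0 < b := fun b hb => hs b (mem_cons_of_mem hb)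
      have h1 : 0 ≤ s.esymm (j+1) := esymm_nonneg hs' (j+1)
      have h2 : 0 < s.esymm j := ih hs' (by simpa using hj)
      nlinarith

lemma esymm_one' (s : Multiset ℝ) : s.esymm 1 = s.sum := by
  induction s using Multiset.induction with
  | empty => rw [esymm_of_card_lt (by simp)]; simp
  | cons a s ih =>
    rw [show (1:ℕ) = 0 + 1 from rfl, esymm_cons, ih]
    simp [esymm_zero']; ring

-- sum of squares identity
lemma sq_sum_eq (s : Multiset ℝ) :
    s.sum ^ 2 = (s.map (fun a => a ^ 2)).sum + 2 * s.esymm 2 := by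
  induction s using Multiset.induction with
  | empty => simp [esymm_of_card_lt]; exact esymm_of_card_lt (by simp)
  | cons a s ih =>
    rw [Multiset.sum_cons, Multiset.map_cons, Multiset.sum_cons,
      show (2:ℕ) = 1 + 1 from rfl, esymm_cons, esymm_one']
    rw [show (1:ℕ)+1 = 2 from rfl] at *
    nlinarith [ih]

lemma cauchy_sq (s : Multiset ℝ) :
    s.sum ^ 2 ≤ (Multiset.card s : ℝ) * (s.map (fun a => a ^ 2)).sum := by
  induction s using Multiset.induction with
  | empty => simp
  | cons a s ih =>
    rcases Multiset.empty_or_exists_mem s with rfl | ⟨b, hb⟩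
    · simp
    have hcard : 1 ≤ Multiset.card s := by
      rw [Nat.one_le_iff_ne_zero]; intro h0
      rw [Multiset.card_eq_zero] at h0; subst h0; simp at hb
    rw [Multiset.sum_cons, Multiset.map_cons, Multiset.sum_cons, Multiset.card_cons]
    push_cast
    have hc1 : (1:ℝ) ≤ (Multiset.card s : ℝ) := by exact_mod_cast hcard
    have hQ : 0 ≤ (s.map (fun a => a ^ 2)).sum := by
      apply Multiset.sum_nonneg; intro x hx
      obtain ⟨b, _, rfl⟩ := Multiset.mem_map.1 hx; positivity
    have hc : (0:ℝ) ≤ (Multiset.card s : ℝ) := by positivity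
    have h3 : 0 ≤ (Multiset.card s : ℝ) * ((Multiset.card s : ℝ) * (s.map (fun a => a ^ 2)).sum - s.sum ^ 2) :=
      mul_nonneg hc (by linarith)
    nlinarith [sq_nonneg ((Multiset.card s : ℝ) * a - s.sum), sq_nonneg s.sum]

lemma twice_esymm_two_le (s : Multiset ℝ) :
    2 * (Multiset.card s : ℝ) * s.esymm 2 ≤ ((Multiset.card s : ℝ) - 1) * s.sum ^ 2 := by
  have h1 := sq_sum_eq s
  have h2 := cauchy_sq s
  nlinarith


lemma esymm_card (s : Multiset ℝ) : s.esymm (Multiset.card s) = s.prod := by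
  induction s using Multiset.induction with
  | empty => simp [esymm_zero']
  | cons a s ih =>
    rw [Multiset.card_cons, esymm_cons, ih, esymm_of_card_lt (by omega)]
    simp [mul_comm]




lemma sum_map_mul (a : ℝ) (s : Multiset ℝ) : (s.map (fun x => a * x)).sum = a * s.sum := by
  rw [Multiset.sum_map_mul_left]; simp

lemma esymm_map_mul (a : ℝ) (s : Multiset ℝ) (j : ℕ) :
    (s.map (fun x => a * x)).esymm j = a ^ j * s.esymm j := by
  simpa [smul_eq_mul] using (Multiset.pow_smul_esymm a j s).symm

/-- cofactor multiset -/
noncomputable def zm (s : Multiset ℝ) : Multiset ℝ := s.map (fun a => (s.erase a).prod)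

lemma card_zm (s : Multiset ℝ) : Multiset.card (zm s) = Multiset.card s := by
  simp [zm]

lemma zm_cons (a : ℝ) (s : Multiset ℝ) :
    zm (a ::ₘ s) = s.prod ::ₘ (zm s).map (fun x => a * x) := by
  rw [zm, Multiset.map_cons, Multiset.erase_cons_head]
  congr 1
  rw [zm, Multiset.map_map]
  apply Multiset.map_congr rfl
  intro b hb
  have : (a ::ₘ s).erase b = a ::ₘ s.erase b := by
    by_cases hba : b = a
    · subst hba; rw [Multiset.erase_cons_head, Multiset.cons_erase hb]
    · rw [Multiset.erase_cons_tail_of_mem hb]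
  simp [this]

lemma zm_sum (s : Multiset ℝ) (hs : s ≠ 0) :
    (zm s).sum = s.esymm (Multiset.card s - 1) := by
  induction s using Multiset.induction with
  | empty => simp at hs
  | cons a t ih =>
    rw [zm_cons, Multiset.sum_cons, sum_map_mul]
    rcases Multiset.empty_or_exists_mem t with rfl | ⟨b, hb⟩
    · simp [zm, esymm_zero']
    have ht : t ≠ 0 := by rintro rfl; simp at hb
    have hct : 1 ≤ Multiset.card t := Multiset.card_pos.2 ht
    rw [ih ht]
    rw [Multiset.card_cons, Nat.add_sub_cancel,
      show Multiset.card t = (Multiset.card t - 1) + 1 by omega, esymm_cons]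
    rw [show Multiset.card t - 1 + 1 = Multiset.card t by omega, ← esymm_card]

lemma zm_esymm_two (s : Multiset ℝ) (hs : 2 ≤ Multiset.card s) :
    (zm s).esymm 2 = s.prod * s.esymm (Multiset.card s - 2) := by
  induction s using Multiset.induction with
  | empty => simp at hs
  | cons a t ih =>
    have hct : 1 ≤ Multiset.card t := by
      rw [Multiset.card_cons] at hs; omega
    have ht : t ≠ 0 := by
      intro h; rw [h] at hct; simp at hct
    rw [zm_cons, show (2:ℕ) = 1 + 1 from rfl, esymm_cons, esymm_map_mul, esymm_one',
      sum_map_mul, zm_sum t ht]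
    rw [show (1:ℕ)+1 = 2 from rfl, Multiset.card_cons,
      show Multiset.card t + 1 - 2 = Multiset.card t - 1 by omega]
    by_cases h2 : 2 ≤ Multiset.card t
    · rw [ih h2]
      rw [show Multiset.card t - 1 = (Multiset.card t - 2) + 1 by omega, esymm_cons,
        Multiset.prod_cons]
      ring
    · have hct1 : Multiset.card t = 1 := by omega
      rw [esymm_of_card_lt (by rw [card_zm, hct1]; omega), hct1]
      simp only [Nat.sub_self, esymm_zero', Multiset.prod_cons]
      ring

/-- Newton's inequality, top case: indices m-2, m-1, m. -/
lemma newton_top (s : Multiset ℝ) (hs : 2 ≤ Multiset.card s) :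
    2 * (Multiset.card s : ℝ) * (s.esymm (Multiset.card s) * s.esymm (Multiset.card s - 2)) ≤
      ((Multiset.card s : ℝ) - 1) * s.esymm (Multiset.card s - 1) ^ 2 := by
  have h := twice_esymm_two_le (zm s)
  rw [card_zm, zm_esymm_two s hs, zm_sum s (by rintro rfl; simp at hs)] at h
  rw [esymm_card]
  linarith




/-- Differentiation step: esymm values get multiplied by `(m-j)/m`. -/
lemma exists_deriv_multiset (s : Multiset ℝ) (hs : 1 ≤ Multiset.card s) :
    ∃ t : Multiset ℝ, Multiset.card t = Multiset.card s - 1 ∧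
      ∀ j : ℕ, (Multiset.card s : ℝ) * t.esymm j =
        ((Multiset.card s : ℝ) - j) * s.esymm j := by
  set m := Multiset.card s with hm
  set f : ℝ[X] := (s.map (fun r => X + C r)).prod with hf
  have hmonic : f.Monic :=
    monic_multiset_prod_of_monic s _ (fun r _ => monic_X_add_C r)
  have hdeg : f.natDegree = m := by
    rw [hf, natDegree_multiset_prod_of_monic _ (by
      intro p hp; obtain ⟨r, _, rfl⟩ := Multiset.mem_map.1 hp; exact monic_X_add_C r)]
    rw [Multiset.map_map]
    simp [Function.comp, natDegree_X_add_C, hm]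
  have hroots : f.roots = s.map (fun a => -a) := by
    have heq : (s.map (fun r => X + C r)) = ((s.map (fun a => -a)).map (fun a => X - C a)) := by
      rw [Multiset.map_map]
      apply Multiset.map_congr rfl
      intro r _
      simp [sub_neg_eq_add]
    rw [hf, heq, roots_multiset_prod_X_sub_C]
  have hcardroots : Multiset.card f.roots = m := by rw [hroots]; simp [hm]
  have h1 : m - 1 ≤ Multiset.card (derivative f).roots := by
    have := Polynomial.card_roots_le_derivative f
    omega
  have h2 : Multiset.card (derivative f).roots ≤ (derivative f).natDegree :=
    Polynomial.card_roots' _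
  have h3 : (derivative f).natDegree ≤ m - 1 := by
    have := Polynomial.natDegree_derivative_le f
    omega
  have hdeg' : (derivative f).natDegree = m - 1 := by omega
  have hcard' : Multiset.card (derivative f).roots = (derivative f).natDegree := by omega
  have hlc : (derivative f).leadingCoeff = (m : ℝ) := by
    have hcm : f.coeff m = 1 := by rw [← hdeg]; exact hmonic.coeff_natDegree
    rw [Polynomial.leadingCoeff, hdeg', Polynomial.coeff_derivative,
      show m - 1 + 1 = m by omega, hcm, one_mul, Nat.cast_sub hs]
    push_cast
    ring
  refine ⟨(derivative f).roots.map (fun a => -a), by rw [Multiset.card_map]; omega, ?_⟩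
  intro j
  by_cases hj : j ≤ m - 1
  · have key := Polynomial.coeff_eq_esymm_roots_of_card hcard'
      (k := (m-1) - j) (by omega)
    rw [hdeg', show m - 1 - (m - 1 - j) = j by omega, hlc] at key
    have hesymm_neg := Multiset.esymm_neg (derivative f).roots j
    have hcoeff : (derivative f).coeff (m - 1 - j) = f.coeff (m - j) * (m - j : ℕ) := by
      rw [Polynomial.coeff_derivative, show m - 1 - j + 1 = m - j by omega,
        Nat.cast_sub (by omega : j ≤ m - 1), Nat.cast_sub hs,
        Nat.cast_sub (by omega : j ≤ m)]
      ring
    have hfc : f.coeff (m - j) = s.esymm j := by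
      rw [hf, Multiset.prod_X_add_C_coeff s (by omega)]
      congr 1
      omega
    rw [hcoeff, hfc] at key
    rw [hesymm_neg, show (m:ℝ) * ((-1)^j * (derivative f).roots.esymm j)
        = (m:ℝ) * (-1)^j * (derivative f).roots.esymm j by ring, ← key,
      Nat.cast_sub (by omega : j ≤ m)]
    ring
  · have hcardt : Multiset.card ((derivative f).roots.map (fun a => -a)) < j := by
      rw [Multiset.card_map]; omega
    rw [esymm_of_card_lt hcardt, mul_zero]
    rcases eq_or_lt_of_le (by omega : m ≤ j) with rfl | hmj
    · simp
    · rw [esymm_of_card_lt (by omega : Multiset.card s < j), mul_zero]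



lemma choose_cast_identity {m i : ℕ} (him : i ≤ m) (hm : 1 ≤ m) :
    ((m:ℝ) - i) * (m.choose i : ℝ) = (m : ℝ) * ((m-1).choose i : ℝ) := by
  have h := Nat.choose_mul_succ_eq (m-1) i
  rw [show m - 1 + 1 = m by omega] at h
  have h2 := congrArg (Nat.cast : ℕ → ℝ) h
  push_cast [Nat.cast_sub him] at h2
  linarith

lemma two_choose_two (m : ℕ) : 2 * m.choose 2 = m * (m - 1) := by
  rcases Nat.eq_zero_or_pos m with rfl | hm
  · simp
  rw [Nat.choose_two_right, Nat.mul_div_cancel']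
  obtain ⟨c, hc⟩ := Nat.even_mul_succ_self (m - 1)
  rw [show m - 1 + 1 = m by omega, mul_comm] at hc
  exact ⟨c, by omega⟩

/-- Newton's inequality (normalized, cross-multiplied form) for real multisets. -/
lemma newton : ∀ (m : ℕ) (s : Multiset ℝ), Multiset.card s = m → ∀ j : ℕ, j + 2 ≤ m →
    s.esymm j * s.esymm (j+2) * ((m.choose (j+1) : ℝ))^2 ≤
      s.esymm (j+1)^2 * (m.choose j : ℝ) * (m.choose (j+2) : ℝ) := by
  intro m
  induction m using Nat.strong_induction_on with
  | _ m ih =>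
    intro s hcard j hj
    rcases eq_or_lt_of_le hj with heq | hlt
    · -- base case m = j + 2
      have hj0 : j = m - 2 := by omega
      have hj1 : j + 1 = m - 1 := by omega
      have hj2 : j + 2 = m := by omega
      subst hj0
      rw [hj1, hj2]
      have hc2 : (m.choose (m-1) : ℝ) = m := by
        rw [show m - 1 = m - (m - (m-1)) by omega]
        rw [Nat.choose_symm (by omega)]
        rw [show m - (m - 1) = 1 by omega, Nat.choose_one_right]
      have hc0 : 2 * (m.choose (m-2) : ℝ) = m * ((m:ℝ) - 1) := by
        rw [show m - 2 = m - (m - (m-2)) by omega, Nat.choose_symm (by omega),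
          show m - (m - 2) = 2 by omega]
        have := congrArg (Nat.cast : ℕ → ℝ) (two_choose_two m)
        push_cast [Nat.cast_sub (by omega : 1 ≤ m)] at this
        linarith
      have hcm : (m.choose m : ℝ) = 1 := by rw [Nat.choose_self]; norm_num
      have hnt := newton_top s (by omega)
      rw [hcard] at hnt
      rw [hc2, hcm]
      nlinarith [hnt]
    · -- inductive step
      obtain ⟨t, hct, hrel⟩ := exists_deriv_multiset s (by omega)
      rw [hcard] at hct hrel
      have IH := ih (m-1) (by omega) t (by omega) j (by omega)
      have e0 := hrel j
      have e1 := hrel (j+1)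
      have e2 := hrel (j+2)
      have f0 := choose_cast_identity (show j ≤ m by omega) (show 1 ≤ m by omega)
      have f1 := choose_cast_identity (show j+1 ≤ m by omega) (show 1 ≤ m by omega)
      have f2 := choose_cast_identity (show j+2 ≤ m by omega) (show 1 ≤ m by omega)
      push_cast at e1 e2 f1 f2
      have ha0 : (0:ℝ) < (m:ℝ) - j := by
        have : (j:ℝ) < m := by exact_mod_cast (by omega : j < m)
        linarith
      have ha1 : (0:ℝ) < (m:ℝ) - j - 1 := by
        have : ((j+1 : ℕ):ℝ) < m := by exact_mod_cast (by omega : j + 1 < m)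
        push_cast at this; linarith
      have ha2 : (0:ℝ) < (m:ℝ) - j - 2 := by
        have : ((j+2 : ℕ):ℝ) < m := by exact_mod_cast (by omega : j + 2 < m)
        push_cast at this; linarith
      have e1' : (m:ℝ) * t.esymm (j+1) = ((m:ℝ) - j - 1) * s.esymm (j+1) := by
        rw [e1]; ring
      have e2' : (m:ℝ) * t.esymm (j+2) = ((m:ℝ) - j - 2) * s.esymm (j+2) := by
        rw [e2]; ring
      have f1' : ((m:ℝ) - j - 1) * (m.choose (j+1) : ℝ) = (m:ℝ) * ((m-1).choose (j+1) : ℝ) := by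
        rw [← f1]; ring
      have f2' : ((m:ℝ) - j - 2) * (m.choose (j+2) : ℝ) = (m:ℝ) * ((m-1).choose (j+2) : ℝ) := by
        rw [← f2]; ring
      set A := s.esymm j
      set B := s.esymm (j+1)
      set Cc := s.esymm (j+2)
      set A' := t.esymm j
      set B' := t.esymm (j+1)
      set C' := t.esymm (j+2)
      set c0 := (m.choose j : ℝ)
      set c1 := (m.choose (j+1) : ℝ)
      set c2 := (m.choose (j+2) : ℝ)
      set d0 := ((m-1).choose j : ℝ)
      set d1 := ((m-1).choose (j+1) : ℝ)
      set d2 := ((m-1).choose (j+2) : ℝ)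
      have hP : (0:ℝ) < ((m:ℝ) - j) * ((m:ℝ) - j - 1)^2 * ((m:ℝ) - j - 2) := by positivity
      apply le_of_mul_le_mul_right _ hP
      calc A * Cc * c1^2 * (((m:ℝ) - j) * ((m:ℝ) - j - 1)^2 * ((m:ℝ) - j - 2))
          = ((((m:ℝ) - j) * A) * (((m:ℝ) - j - 2) * Cc)) * ((((m:ℝ) - j - 1) * c1))^2 := by
            ring
        _ = (((m:ℝ) * A') * ((m:ℝ) * C')) * ((m:ℝ) * d1)^2 := by
            rw [← e0, ← e2', ← f1']
        _ = (m:ℝ)^4 * (A' * C' * d1^2) := by ring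
        _ ≤ (m:ℝ)^4 * (B'^2 * d0 * d2) := by
            apply mul_le_mul_of_nonneg_left IH (by positivity)
        _ = (((m:ℝ) * B')^2) * (((m:ℝ) * d0) * ((m:ℝ) * d2)) := by ring
        _ = ((((m:ℝ) - j - 1) * B)^2) * (((((m:ℝ) - j) * c0)) * ((((m:ℝ) - j - 2) * c2))) := by
            rw [← e1', ← f0, ← f2']
        _ = B^2 * c0 * c2 * (((m:ℝ) - j) * ((m:ℝ) - j - 1)^2 * ((m:ℝ) - j - 2)) := by ring




lemma choose_log_concave (n j : ℕ) :
    n.choose j * n.choose (j+2) ≤ n.choose (j+1) * n.choose (j+1) := by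
  by_cases h : j + 2 ≤ n
  case neg =>
    rw [show n.choose (j+2) = 0 from Nat.choose_eq_zero_of_lt (by omega)]
    simp
  have h1 : n.choose (j+1) * (j+1) = n.choose j * (n - j) := Nat.choose_succ_right_eq n j
  have h2 : n.choose (j+2) * (j+2) = n.choose (j+1) * (n - (j+1)) := Nat.choose_succ_right_eq n (j+1)
  have key : (n.choose j * n.choose (j+2)) * ((n - j) * (j+2))
      = (n.choose (j+1) * n.choose (j+1)) * ((j+1) * (n - (j+1))) := by
    calc (n.choose j * n.choose (j+2)) * ((n - j) * (j+2))
        = (n.choose j * (n - j)) * (n.choose (j+2) * (j+2)) := by ring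
      _ = (n.choose (j+1) * (j+1)) * (n.choose (j+1) * (n - (j+1))) := by rw [← h1, ← h2]
      _ = (n.choose (j+1) * n.choose (j+1)) * ((j+1) * (n - (j+1))) := by ring
  have hle : (j+1) * (n - (j+1)) ≤ (n - j) * (j+2) := by
    have : n - (j+1) ≤ n - j := by omega
    calc (j+1) * (n - (j+1)) ≤ (j+2) * (n - j) := Nat.mul_le_mul (by omega) this
      _ = (n - j) * (j+2) := by ring
  have hpos : 0 < (n - j) * (j+2) := by
    have : 0 < n - j := by omega
    positivity
  apply Nat.le_of_mul_le_mul_right _ hpos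
  calc (n.choose j * n.choose (j+2)) * ((n - j) * (j+2))
      = (n.choose (j+1) * n.choose (j+1)) * ((j+1) * (n - (j+1))) := key
    _ ≤ (n.choose (j+1) * n.choose (j+1)) * ((n - j) * (j+2)) := Nat.mul_le_mul_left _ hle

/-- If all esymm are nonnegative and the top one positive, all elements are positive. -/
lemma all_pos {s : Multiset ℝ} (hnn : ∀ j, j ≤ Multiset.card s → 0 ≤ s.esymm j)
    (hp : 0 < s.esymm (Multiset.card s)) : ∀ a ∈ s, 0 < a := by
  intro a ha
  by_contra hle
  push_neg at hle
  set m := Multiset.card s with hm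
  have h1m : 1 ≤ m := by
    rw [hm]; exact Multiset.card_pos.2 (by rintro rfl; simp at ha)
  set f : ℝ[X] := (s.map (fun r => X + C r)).prod with hf
  have heval : f.eval (-a) = 0 := by
    rw [hf, Polynomial.eval_multiset_prod, Multiset.map_map]
    apply Multiset.prod_eq_zero
    refine Multiset.mem_map.2 ⟨a, ha, ?_⟩
    simp
  have hexp : f.eval (-a) = ∑ j ∈ Finset.range (m + 1), s.esymm j * (-a) ^ (m - j) := by
    rw [hf, Multiset.prod_X_add_C_eq_sum_esymm]
    rw [Polynomial.eval_finset_sum]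
    apply Finset.sum_congr rfl
    intro j _
    simp [hm]
  have hpos : 0 < ∑ j ∈ Finset.range (m + 1), s.esymm j * (-a) ^ (m - j) := by
    apply Finset.sum_pos'
    · intro j hj
      rw [Finset.mem_range] at hj
      have h1 : 0 ≤ s.esymm j := by
        rcases Nat.eq_zero_or_pos j with rfl | hj0
        · rw [esymm_zero']; norm_num
        · exact hnn j (by omega)
      have h2 : (0:ℝ) ≤ (-a) ^ (m - j) := by
        apply pow_nonneg; linarith
      positivity
    · refine ⟨m, Finset.mem_range.2 (by omega), ?_⟩
      rw [Nat.sub_self, pow_zero, mul_one]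
      exact hp
  rw [hexp] at heval
  linarith

/-- Nonneg up to k plus positive at k implies positive up to k. -/
lemma claim_pos : ∀ (m : ℕ) (s : Multiset ℝ) (k : ℕ), Multiset.card s = m → 1 ≤ k → k ≤ m →
    (∀ j, 1 ≤ j → j ≤ k → 0 ≤ s.esymm j) → 0 < s.esymm k →
    ∀ j, 1 ≤ j → j ≤ k → 0 < s.esymm j := by
  intro m
  induction m using Nat.strong_induction_on with
  | _ m ih =>
    intro s k hcard hk1 hkm hnn hk j hj1 hjk
    rcases eq_or_lt_of_le hkm with heq | hlt
    · -- k = card s : all elements positive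
      have hap : ∀ a ∈ s, 0 < a := by
        apply all_pos
        · intro i hi
          rcases Nat.eq_zero_or_pos i with rfl | hi0
          · rw [esymm_zero']; norm_num
          · exact hnn i (by omega) (by omega)
        · rw [hcard, ← heq]; exact hk
      exact esymm_pos hap (by omega)
    · -- k < card s : differentiate
      obtain ⟨t, hct, hrel⟩ := exists_deriv_multiset s (by omega)
      rw [hcard] at hct hrel
      have hmpos : (0:ℝ) < m := by
        have : 0 < m := by omega
        exact_mod_cast this
      have hcast : ∀ i : ℕ, i < m → (0:ℝ) < (m:ℝ) - i := by
        intro i hi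
        have : (i:ℝ) < m := by exact_mod_cast hi
        linarith
      have htk : ∀ i, 1 ≤ i → i ≤ k → 0 ≤ t.esymm i := by
        intro i h1 h2
        have h := hrel i
        have h3 : 0 ≤ ((m:ℝ) - i) * s.esymm i :=
          mul_nonneg (le_of_lt (hcast i (by omega))) (hnn i h1 h2)
        nlinarith
      have htpos : 0 < t.esymm k := by
        have h := hrel k
        have h3 : 0 < ((m:ℝ) - k) * s.esymm k :=
          mul_pos (hcast k (by omega)) hk
        nlinarith
      have hjt := ih (m-1) (by omega) t k hct hk1 (by omega) htk htpos j hj1 hjk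
      have h := hrel j
      have h3 : 0 < (m:ℝ) * t.esymm j := mul_pos hmpos hjt
      have h4 : (0:ℝ) < (m:ℝ) - j := hcast j (by omega)
      nlinarith




/-- Deleting one element from a `Γ_k`-multiset keeps `esymm` positive up to `k-1`. -/
lemma deletion : ∀ (k : ℕ), 2 ≤ k → ∀ (a : ℝ) (s : Multiset ℝ), k ≤ Multiset.card s + 1 →
    (∀ j, 1 ≤ j → j ≤ k → 0 < (a ::ₘ s).esymm j) →
    ∀ j, 1 ≤ j → j ≤ k - 1 → 0 < s.esymm j := by
  intro k
  induction k using Nat.strong_induction_on with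
  | _ k ih =>
    intro hk2 a s hkc h j hj1 hjk
    rcases eq_or_lt_of_le hkc with heq | hlt
    · -- k = card s + 1 : all entries of a ::ₘ s positive
      have hap : ∀ b ∈ (a ::ₘ s), 0 < b := by
        apply all_pos
        · intro i hi
          rcases Nat.eq_zero_or_pos i with rfl | hi0
          · rw [esymm_zero']; norm_num
          · exact le_of_lt (h i (by omega) (by
              have : Multiset.card (a ::ₘ s) = Multiset.card s + 1 := Multiset.card_cons a s
              omega))
        · have hcc : Multiset.card (a ::ₘ s) = k := by
            rw [Multiset.card_cons]; omega
          rw [hcc]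
          exact h k (by omega) le_rfl
      exact esymm_pos (fun b hb => hap b (Multiset.mem_cons_of_mem hb)) (by omega)
    · -- k ≤ card s
      have hcs : k ≤ Multiset.card s := by omega
      -- it suffices to treat j = k - 1; smaller j follow from ih with k' = j+1? 
      -- direct: strong downward. We prove positivity at k-1; for j < k-1 use ih (j+1).
      rcases eq_or_lt_of_le hjk with hej | hlj
      case inr => -- j < k - 1, use ih with k' := j + 1 ≤ k - 1 < k
        rcases eq_or_lt_of_le hj1 with he1 | h2j
        · -- j = 1 : cannot use ih (needs 2 ≤ k'); use ih with k' = 2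
          exact ih 2 (by omega) le_rfl a s (by omega)
            (fun i hi1 hik => h i hi1 (by omega)) j hj1 (by omega)
        · exact ih (j+1) (by omega) (by omega) a s (by omega)
            (fun i hi1 hik => h i hi1 (by omega)) j hj1 (by omega)
      -- now j = k - 1
      subst hej
      by_contra hS
      push_neg at hS
      rcases eq_or_lt_of_le hk2 with he2 | h3k
      · -- k = 2 : special quadratic argument
        subst he2
        have h1 := h 1 (by omega) (by omega)
        have h2 := h 2 (by omega) (by omega)
        rw [show (1:ℕ) = 0 + 1 from rfl, esymm_cons, esymm_zero'] at h1
        rw [show (2:ℕ) = 1 + 1 from rfl, esymm_cons] at h2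
        have hsq := sq_sum_eq s
        rw [← esymm_one'] at hsq
        have hQ : 0 ≤ (s.map (fun a => a ^ 2)).sum := by
          apply Multiset.sum_nonneg
          intro x hx
          obtain ⟨b, _, rfl⟩ := Multiset.mem_map.1 hx
          positivity
        -- hS : esymm 1 s ≤ 0 (note : goal had esymm (2-1) = esymm 1)
        have hS1 : s.esymm 1 ≤ 0 := by simpa using hS
        nlinarith [mul_nonneg (neg_nonneg.2 hS1) (le_of_lt h1)]
      · -- k ≥ 3
        have hpos : ∀ i, 1 ≤ i → i ≤ k - 2 → 0 < s.esymm i :=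
          ih (k-1) (by omega) (by omega) a s (by omega)
            (fun i hi1 hik => h i hi1 (by omega))
        have hk1x := h (k-1) (by omega) (by omega)
        have hkx := h k (by omega) le_rfl
        rw [show k - 1 = (k-2) + 1 by omega, esymm_cons] at hk1x
        rw [show k = (k-1) + 1 by omega, esymm_cons, show k - 1 + 1 = k by omega] at hkx
        rw [show k - 1 = (k-2) + 1 by omega] at hkx hS
        -- abbreviations
        set E0 := s.esymm (k-2) with hE0
        set E1 := s.esymm ((k-2)+1) with hE1
        set E2 := s.esymm ((k-2)+2) with hE2
        have hkk : k = (k-2) + 2 := by omega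
        have hE2' : s.esymm k = E2 := by rw [hE2, ← hkk]
        rw [hE2'] at hkx
        have hE0pos : 0 < E0 := hpos (k-2) (by omega) le_rfl
        -- Newton on s at j = k-2
        have hN := newton (Multiset.card s) s rfl (k-2) (by omega)
        have hLC := choose_log_concave (Multiset.card s) (k-2)
        have hLCr : ((Multiset.card s).choose (k-2) : ℝ) * ((Multiset.card s).choose ((k-2)+2) : ℝ)
            ≤ ((Multiset.card s).choose ((k-2)+1) : ℝ) * ((Multiset.card s).choose ((k-2)+1) : ℝ) := by
          exact_mod_cast hLC
        have hchoosepos : (0:ℝ) < ((Multiset.card s).choose ((k-2)+1) : ℝ) := by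
          have := Nat.choose_pos (show (k-2)+1 ≤ Multiset.card s by omega)
          exact_mod_cast this
        -- from hk1x : 0 < E1 + a * E0  and hS : E1 ≤ 0
        have ha : 0 < a := by nlinarith
        -- key : E1^2 < E0 * E2
        have hkey : E1^2 < E0 * E2 := by
          rcases eq_or_lt_of_le hS with hE1z | hE1neg
          · -- E1 = 0
            have hE2pos : 0 < E2 := by nlinarith [hkx]
            nlinarith [mul_pos hE0pos hE2pos]
          · nlinarith [mul_pos ha hE0pos]
        -- contradiction with Newton + log-concavity
        set c0 := ((Multiset.card s).choose (k-2) : ℝ) with hc0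
        set c1 := ((Multiset.card s).choose ((k-2)+1) : ℝ) with hc1
        set c2 := ((Multiset.card s).choose ((k-2)+2) : ℝ) with hc2
        have h5 : E1^2 * (c0*c2) ≤ E1^2 * (c1*c1) :=
          mul_le_mul_of_nonneg_left hLCr (sq_nonneg E1)
        have h6 : E1^2 * (c1*c1) < (E0*E2) * (c1*c1) :=
          mul_lt_mul_of_pos_right hkey (mul_pos hchoosepos hchoosepos)
        linarith [hN, h5, h6]




/-- normalized symmetric function -/
noncomputable def pn (s : Multiset ℝ) (j : ℕ) : ℝ :=
  s.esymm j / (((Multiset.card s).choose j : ℕ) : ℝ)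

lemma choose_cast_pos {m j : ℕ} (h : j ≤ m) : (0:ℝ) < ((m.choose j : ℕ) : ℝ) := by
  exact_mod_cast Nat.choose_pos h

lemma pn_zero (s : Multiset ℝ) : pn s 0 = 1 := by
  simp [pn, esymm_zero']

lemma pn_pos {s : Multiset ℝ} {j : ℕ} (hj : j ≤ Multiset.card s) (h : 0 < s.esymm j) :
    0 < pn s j := div_pos h (choose_cast_pos hj)

lemma pn_newton (s : Multiset ℝ) (j : ℕ) (hj : j + 2 ≤ Multiset.card s) :
    pn s j * pn s (j+2) ≤ pn s (j+1)^2 := by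
  have hN := newton (Multiset.card s) s rfl j hj
  rw [pn, pn, pn, div_mul_div_comm, div_pow,
    div_le_div_iff₀ (mul_pos (choose_cast_pos (by omega)) (choose_cast_pos (by omega)))
      (pow_pos (choose_cast_pos (by omega)) 2)]
  nlinarith [hN]

lemma macl_chain : ∀ (k : ℕ) (s : Multiset ℝ), 1 ≤ k → k ≤ Multiset.card s →
    (∀ j, 1 ≤ j → j ≤ k - 1 → 0 < s.esymm j) →
    pn s k ≤ pn s 1 * pn s (k-1) := by
  intro k
  induction k using Nat.strong_induction_on with
  | _ k ih =>
    intro s hk1 hkc hpos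
    rcases eq_or_lt_of_le hk1 with he1 | hk2
    · rw [← he1]
      simp [pn_zero]
    · have hN := pn_newton s (k-2) (by omega)
      rw [show k - 2 + 2 = k by omega, show k - 2 + 1 = k - 1 by omega] at hN
      have hIH := ih (k-1) (by omega) s (by omega) (by omega)
        (fun j hj1 hjk => hpos j hj1 (by omega))
      rw [show k - 1 - 1 = k - 2 by omega] at hIH
      have hpn2 : 0 < pn s (k-2) := by
        rcases Nat.eq_zero_or_pos (k-2) with hz | hp
        · rw [hz, pn_zero]; norm_num
        · exact pn_pos (by omega) (hpos (k-2) (by omega) (by omega))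
      have hpn1 : 0 < pn s (k-1) := pn_pos (by omega) (hpos (k-1) (by omega) (by omega))
      have h2 : pn s (k-1)^2 ≤ pn s (k-1) * (pn s 1 * pn s (k-2)) := by
        nlinarith [mul_le_mul_of_nonneg_left hIH (le_of_lt hpn1)]
      apply le_of_mul_le_mul_right _ hpn2
      calc pn s k * pn s (k-2) = pn s (k-2) * pn s k := by ring
        _ ≤ pn s (k-1)^2 := hN
        _ ≤ pn s (k-1) * (pn s 1 * pn s (k-2)) := h2
        _ = pn s 1 * pn s (k-1) * pn s (k-2) := by ring

lemma macl_pow : ∀ (k : ℕ) (s : Multiset ℝ), 1 ≤ k → k ≤ Multiset.card s →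
    (∀ j, 1 ≤ j → j ≤ k - 1 → 0 < s.esymm j) →
    pn s k ≤ pn s 1 ^ k := by
  intro k
  induction k using Nat.strong_induction_on with
  | _ k ih =>
    intro s hk1 hkc hpos
    rcases eq_or_lt_of_le hk1 with he1 | hk2
    · rw [← he1]; simp
    · have h1 : 0 < pn s 1 := pn_pos (by omega) (hpos 1 (by omega) (by omega))
      have hIH := ih (k-1) (by omega) s (by omega) (by omega)
        (fun j hj1 hjk => hpos j hj1 (by omega))
      have hch := macl_chain k s hk1 hkc hpos
      calc pn s k ≤ pn s 1 * pn s (k-1) := hch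
        _ ≤ pn s 1 * pn s 1 ^ (k-1) := by
            apply mul_le_mul_of_nonneg_left hIH (le_of_lt h1)
        _ = pn s 1 ^ k := by
            rw [← pow_succ']
            congr 1
            omega



/-- The per-element lower bound, in cross-multiplied form. -/
lemma elem_bound (n k : ℕ) (hn : 3 ≤ n) (hk : 2 ≤ k) (hkn : k ≤ n)
    (a : ℝ) (y : Multiset ℝ) (hcy : Multiset.card y = n - 1)
    (hG : ∀ j, 1 ≤ j → j ≤ k → 0 < (a ::ₘ y).esymm j) :
    -(((n:ℝ) - k) * (a ::ₘ y).esymm 1) ≤ a * ((n:ℝ) * ((k:ℝ) - 1)) := by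
  have hcs : Multiset.card (a ::ₘ y) = n := by rw [Multiset.card_cons]; omega
  have hdel : ∀ j, 1 ≤ j → j ≤ k - 1 → 0 < y.esymm j :=
    deletion k hk a y (by omega) hG
  have hEk1 : 0 < y.esymm (k-1) := hdel (k-1) (by omega) le_rfl
  have hS1 : 0 < (a ::ₘ y).esymm 1 := hG 1 (by omega) (by omega)
  have hE1rel : (a ::ₘ y).esymm 1 = y.esymm 1 + a := by
    rw [show (1:ℕ) = 0 + 1 from rfl, esymm_cons, esymm_zero', mul_one]
  have hGk : 0 < (a ::ₘ y).esymm k := hG k (by omega) le_rfl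
  have hGkc : 0 < y.esymm k + a * y.esymm (k-1) := by
    rw [show k = (k-1) + 1 by omega, esymm_cons, show k - 1 + 1 = k by omega] at hGk
    exact hGk
  -- casts
  have hnk : (0:ℝ) ≤ (n:ℝ) - k := by
    have : (k:ℝ) ≤ (n:ℝ) := by exact_mod_cast hkn
    linarith
  have hk1R : (0:ℝ) < (k:ℝ) - 1 := by
    have : (2:ℝ) ≤ (k:ℝ) := by exact_mod_cast hk
    linarith
  have hn1R : (0:ℝ) < (n:ℝ) - 1 := by
    have : (3:ℝ) ≤ (n:ℝ) := by exact_mod_cast hn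
    linarith
  have hkR : (0:ℝ) < (k:ℝ) := by linarith
  have hnR : (0:ℝ) < (n:ℝ) := by linarith
  by_cases hky : y.esymm k ≤ 0
  · -- trivial case : a > 0
    have ha : 0 < a := by nlinarith
    nlinarith [mul_nonneg hnk (le_of_lt hS1), mul_pos ha (mul_pos hnR hk1R)]
  · push_neg at hky
    have hkn1 : k ≤ n - 1 := by
      by_contra hcon
      rw [esymm_of_card_lt (by omega)] at hky
      exact lt_irrefl 0 hky
    have hchain := macl_chain k y (by omega) (by omega) hdel
    rw [pn, pn, pn, hcy] at hchain
    -- ratio identity : k * C(n-1,k) = (n-k) * C(n-1,k-1)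
    have hratio : (k:ℝ) * ((n-1).choose k : ℝ) = ((n:ℝ) - k) * ((n-1).choose (k-1) : ℝ) := by
      have h := Nat.choose_succ_right_eq (n-1) (k-1)
      rw [show k - 1 + 1 = k by omega, show n - 1 - (k-1) = n - k by omega] at h
      have h2 := congrArg (Nat.cast : ℕ → ℝ) h
      push_cast [Nat.cast_sub hkn] at h2
      linarith
    have hc1 : (0:ℝ) < (((n-1).choose 1 : ℕ) : ℝ) := choose_cast_pos (by omega)
    have hck : (0:ℝ) < (((n-1).choose k : ℕ) : ℝ) := choose_cast_pos (by omega)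
    have hck1 : (0:ℝ) < (((n-1).choose (k-1) : ℕ) : ℝ) := choose_cast_pos (by omega)
    have hn1cast : (((n-1 : ℕ)):ℝ) = (n:ℝ) - 1 := by
      push_cast [Nat.cast_sub (by omega : 1 ≤ n)]
      ring
    have hch1 : ((n-1).choose 1 : ℝ) = (n:ℝ) - 1 := by
      rw [Nat.choose_one_right, hn1cast]
    rw [hch1] at hchain
    -- cross-multiplied Maclaurin : E_k y * k * (n-1) ≤ (n-k) * E_1 y * E_{k-1} y
    have hMy : y.esymm k * ((k:ℝ) * ((n:ℝ)-1)) ≤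
        ((n:ℝ) - k) * y.esymm 1 * y.esymm (k-1) := by
      rw [div_le_iff₀ hck] at hchain
      have h2 : y.esymm k * ((k:ℝ) * ((n:ℝ)-1)) ≤
          (y.esymm 1 / ((n:ℝ)-1) * (y.esymm (k-1) / ((n-1).choose (k-1) : ℝ)) *
            ((n-1).choose k : ℝ)) * ((k:ℝ) * ((n:ℝ)-1)) := by
        apply mul_le_mul_of_nonneg_right hchain (by positivity)
      calc y.esymm k * ((k:ℝ) * ((n:ℝ)-1)) ≤ _ := h2
        _ = (y.esymm 1 * y.esymm (k-1)) * ((k:ℝ) * ((n-1).choose k : ℝ)) /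
              ((n-1).choose (k-1) : ℝ) := by
            field_simp
        _ = ((n:ℝ) - k) * y.esymm 1 * y.esymm (k-1) := by
            rw [hratio]
            field_simp
    -- combine
    have hprod : 0 < (y.esymm k + a * y.esymm (k-1)) * ((k:ℝ) * ((n:ℝ)-1)) :=
      mul_pos hGkc (by positivity)
    rw [hE1rel]
    nlinarith [hEk1, hprod, hMy]



lemma main_ms (n k : ℕ) (hn : 3 ≤ n) (hk : 2 ≤ k) (hkn : k ≤ n) (h2k : n ≤ 2 * k)
    (a : ℝ) (y : Multiset ℝ) (hcy : Multiset.card y = n - 1)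
    (hG : ∀ j, 1 ≤ j → j ≤ k → 0 < (a ::ₘ y).esymm j) :
    (2 * (k : ℝ) - n) * ((n : ℝ) - 1) / (((n : ℝ) - 2) * ((k : ℝ) - 1)) *
        ((n.choose k : ℝ) ^ (-(1 / (k : ℝ)))) *
        ((a ::ₘ y).esymm k) ^ (1 / (k : ℝ)) ≤ a + (a ::ₘ y).esymm 1 / ((n:ℝ) - 2) := by
  have hcs : Multiset.card (a ::ₘ y) = n := by rw [Multiset.card_cons]; omega
  set s := a ::ₘ y with hsdef
  set S1 := s.esymm 1 with hS1def
  set Ek := s.esymm k with hEkdef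
  have hS1 : 0 < S1 := hG 1 (by omega) (by omega)
  have hEk : 0 < Ek := hG k (by omega) le_rfl
  -- casts
  have hk1R : (0:ℝ) < (k:ℝ) - 1 := by
    have : (2:ℝ) ≤ (k:ℝ) := by exact_mod_cast hk
    linarith
  have hn2R : (0:ℝ) < (n:ℝ) - 2 := by
    have : (3:ℝ) ≤ (n:ℝ) := by exact_mod_cast hn
    linarith
  have hnR : (0:ℝ) < (n:ℝ) := by linarith
  have hkR : (0:ℝ) < (k:ℝ) := by linarith
  have h2kR : (0:ℝ) ≤ 2*(k:ℝ) - n := by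
    have : (n:ℝ) ≤ 2*(k:ℝ) := by exact_mod_cast h2k
    linarith
  have hnkR : (0:ℝ) ≤ (n:ℝ) - k := by
    have : (k:ℝ) ≤ (n:ℝ) := by exact_mod_cast hkn
    linarith
  have hn1R : (0:ℝ) < (n:ℝ) - 1 := by linarith
  set Ck := ((n.choose k : ℕ) : ℝ) with hCkdef
  have hCk : 0 < Ck := choose_cast_pos hkn
  -- Maclaurin : Ek ≤ Ck * (S1/n)^k
  have hpow := macl_pow k s (by omega) (by omega) (fun j h1 h2 => hG j h1 (by omega))
  rw [pn, pn, hcs, Nat.choose_one_right] at hpow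
  have hEkle : Ek ≤ Ck * (S1 / n) ^ k := by
    rw [div_le_iff₀ hCk] at hpow
    calc Ek ≤ (S1 / n) ^ k * Ck := hpow
      _ = Ck * (S1 / n) ^ k := by ring
  -- B := Ck^(1/k) * (S1/n)
  set B := Ck ^ ((1:ℝ) / k) * (S1 / n) with hBdef
  have hBpos : 0 < B := by
    apply mul_pos (Real.rpow_pos_of_pos hCk _) (by positivity)
  have hBk : B ^ k = Ck * (S1 / n) ^ k := by
    rw [hBdef, mul_pow]
    congr 1
    rw [← Real.rpow_natCast (Ck ^ ((1:ℝ)/k)) k, ← Real.rpow_mul (le_of_lt hCk),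
      one_div_mul_cancel (ne_of_gt hkR), Real.rpow_one]
  have hroot : Ek ^ ((1:ℝ) / k) ≤ B := by
    have h1 : Ek ^ ((1:ℝ)/k) ≤ (B ^ k) ^ ((1:ℝ)/k) := by
      apply Real.rpow_le_rpow (le_of_lt hEk) (hBk ▸ hEkle) (by positivity)
    calc Ek ^ ((1:ℝ)/k) ≤ (B ^ k) ^ ((1:ℝ)/k) := h1
      _ = B := by
        rw [← Real.rpow_natCast B k, ← Real.rpow_mul (le_of_lt hBpos),
          mul_one_div_cancel (ne_of_gt hkR), Real.rpow_one]
  -- constant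
  set c := (2 * (k : ℝ) - n) * ((n : ℝ) - 1) / (((n : ℝ) - 2) * ((k : ℝ) - 1)) with hcdef
  have hc : 0 ≤ c := by positivity
  have hfactor : 0 ≤ c * (Ck ^ (-(1 / (k:ℝ)))) :=
    mul_nonneg hc (le_of_lt (Real.rpow_pos_of_pos hCk _))
  have hchain : c * (Ck ^ (-(1 / (k:ℝ)))) * Ek ^ (1 / (k:ℝ)) ≤ c * (S1 / n) := by
    calc c * (Ck ^ (-(1 / (k:ℝ)))) * Ek ^ (1 / (k:ℝ))
        ≤ c * (Ck ^ (-(1 / (k:ℝ)))) * B := by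
          apply mul_le_mul_of_nonneg_left hroot hfactor
      _ = c * (Ck ^ (-(1 / (k:ℝ))) * Ck ^ ((1:ℝ) / k)) * (S1 / n) := by
          rw [hBdef]; ring
      _ = c * (S1 / n) := by
          rw [← Real.rpow_add hCk, neg_add_cancel, Real.rpow_zero, mul_one]
  -- final arithmetic
  have hB2 := elem_bound n k hn hk hkn a y hcy hG
  rw [← hsdef, ← hS1def] at hB2
  have hid : a + S1 / ((n:ℝ) - 2) - c * (S1 / n)
      = (a * ((n:ℝ) * ((k:ℝ) - 1)) + ((n:ℝ) - k) * S1) / ((n:ℝ) * ((k:ℝ) - 1)) := by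
    rw [hcdef]
    field_simp
    ring
  have hnum : 0 ≤ a * ((n:ℝ) * ((k:ℝ) - 1)) + ((n:ℝ) - k) * S1 := by linarith
  have hfin : 0 ≤ a + S1 / ((n:ℝ) - 2) - c * (S1 / n) := by
    rw [hid]
    exact div_nonneg hnum (by positivity)
  linarith



/-- multiset of values -/
noncomputable def vals (n : ℕ) (x : Fin n → ℝ) : Multiset ℝ := Finset.univ.val.map x

lemma card_vals (n : ℕ) (x : Fin n → ℝ) : Multiset.card (vals n x) = n := by
  simp [vals]

lemma sigmaElem_eq_esymm (n j : ℕ) (x : Fin n → ℝ) :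
    sigmaElem n j x = (vals n x).esymm j :=
  (Finset.esymm_map_val x Finset.univ j).symm

lemma continuous_sigmaElem (n j : ℕ) : Continuous (sigmaElem n j) := by
  unfold sigmaElem
  apply continuous_finset_sum
  intro s _
  apply continuous_finset_prod
  intro i _
  exact continuous_apply i

lemma sigmaElem_one_eq_sum (n : ℕ) (x : Fin n → ℝ) :
    sigmaElem n 1 x = ∑ i, x i := by
  rw [sigmaElem_eq_esymm, esymm_one', vals]
  rfl

lemma sigmaElem_ones (n j : ℕ) :
    sigmaElem n j (fun _ => (1:ℝ)) = (n.choose j : ℝ) := by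
  unfold sigmaElem
  simp

/-- the open set where σ_1, …, σ_k are all positive -/
def Gset (n k : ℕ) : Set (Fin n → ℝ) := {x | ∀ j, 1 ≤ j → j ≤ k → 0 < sigmaElem n j x}

lemma isOpen_Gset (n k : ℕ) : IsOpen (Gset n k) := by
  have : Gset n k = ⋂ j ∈ Finset.Icc 1 k, {x | 0 < sigmaElem n j x} := by
    ext x
    simp only [Gset, Set.mem_setOf_eq, Set.mem_iInter, Finset.mem_Icc]
    exact ⟨fun h j hj => h j hj.1 hj.2, fun h j h1 h2 => h j ⟨h1, h2⟩⟩
  rw [this]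
  apply isOpen_biInter_finset
  intro j _
  exact isOpen_lt continuous_const (continuous_sigmaElem n j)

lemma gamma_subset_Gset (n k : ℕ) (hk : 1 ≤ k) (hkn : k ≤ n) :
    GammaPlus n k ⊆ Gset n k := by
  have hGsub : ∀ j, 1 ≤ j → j ≤ k → closure (Gset n k) ⊆ {x | 0 ≤ sigmaElem n j x} := by
    intro j h1 h2
    apply closure_minimal
    · intro x hx
      exact le_of_lt (hx j h1 h2)
    · exact isClosed_le continuous_const (continuous_sigmaElem n j)
  have hdisj : Disjoint (Gset n k) (closure (Gset n k))ᶜ :=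
    Disjoint.mono_left subset_closure disjoint_compl_right
  have hsuv : GammaPlus n k ⊆ Gset n k ∪ (closure (Gset n k))ᶜ := by
    intro x hx
    have hx' : x ∈ connectedComponentIn {y : Fin n → ℝ | 0 < sigmaElem n k y} (fun _ => 1) := hx
    have hxk : 0 < sigmaElem n k x :=
      connectedComponentIn_subset {y : Fin n → ℝ | 0 < sigmaElem n k y} (fun _ => 1) hx'
    by_cases hcl : x ∈ closure (Gset n k)
    · left
      intro j h1 h2
      rw [sigmaElem_eq_esymm]
      apply claim_pos n (vals n x) k (card_vals n x) hk hkn _ _ j h1 h2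
      · intro i hi1 hi2
        rw [← sigmaElem_eq_esymm]
        exact hGsub i hi1 hi2 hcl
      · rw [← sigmaElem_eq_esymm]
        exact hxk
    · right; exact hcl
  have hne : (GammaPlus n k ∩ Gset n k).Nonempty := by
    refine ⟨fun _ => 1, ?_, ?_⟩
    · exact mem_connectedComponentIn (by
        simp only [Set.mem_setOf_eq, sigmaElem_ones]
        exact_mod_cast Nat.choose_pos hkn)
    · intro j h1 h2
      rw [sigmaElem_ones]
      exact_mod_cast Nat.choose_pos (le_trans h2 hkn)
  exact isPreconnected_connectedComponentIn.subset_left_of_subset_union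
    (isOpen_Gset n k) isClosed_closure.isOpen_compl hdisj hsuv hne

/-- The closed target set. -/
def Kset (n k : ℕ) : Set (Fin n → ℝ) :=
  {x | ∀ i, (2 * (k : ℝ) - n) * ((n : ℝ) - 1) / (((n : ℝ) - 2) * ((k : ℝ) - 1)) *
        ((n.choose k : ℝ) ^ (-(1 / (k : ℝ)))) *
        (sigmaElem n k x) ^ (1 / (k : ℝ)) ≤ x i + sigmaElem n 1 x / ((n:ℝ) - 2)}

lemma isClosed_Kset (n k : ℕ) : IsClosed (Kset n k) := by
  have : Kset n k = ⋂ i : Fin n, {x | (2 * (k : ℝ) - n) * ((n : ℝ) - 1) / (((n : ℝ) - 2) * ((k : ℝ) - 1)) *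
        ((n.choose k : ℝ) ^ (-(1 / (k : ℝ)))) *
        (sigmaElem n k x) ^ (1 / (k : ℝ)) ≤ x i + sigmaElem n 1 x / ((n:ℝ) - 2)} := by
    ext x; simp [Kset]
  rw [this]
  apply isClosed_iInter
  intro i
  apply isClosed_le
  · apply Continuous.mul continuous_const
    apply Continuous.rpow_const (continuous_sigmaElem n k)
    intro x
    right
    positivity
  · exact Continuous.add (continuous_apply i)
      (Continuous.div_const (continuous_sigmaElem n 1) _)

lemma Gset_subset_Kset (n k : ℕ) (hn : 3 ≤ n) (hk : 2 ≤ k) (hkn : k ≤ n) (h2k : n ≤ 2 * k) :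
    Gset n k ⊆ Kset n k := by
  intro x hx i
  -- decompose the multiset
  have hmem : i ∈ Finset.univ.val := Finset.mem_univ_val i
  have hdecomp : vals n x = x i ::ₘ (Finset.univ.val.erase i).map x := by
    rw [vals, ← Multiset.map_cons, Multiset.cons_erase hmem]
  have hcy : Multiset.card ((Finset.univ.val.erase i).map x) = n - 1 := by
    rw [Multiset.card_map, Multiset.card_erase_of_mem hmem]
    simp
  have hG : ∀ j, 1 ≤ j → j ≤ k → 0 < (x i ::ₘ (Finset.univ.val.erase i).map x).esymm j := by
    intro j h1 h2
    rw [← hdecomp, ← sigmaElem_eq_esymm]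
    exact hx j h1 h2
  have h := main_ms n k hn hk hkn h2k (x i) _ hcy hG
  rw [← hdecomp, ← sigmaElem_eq_esymm, ← sigmaElem_eq_esymm] at h
  exact h


end MinSigma


/-- Lemma 1, second part: if `A_Λ ∈ Γ̄_k^+` with `n/2 ≤ k ≤ n`, then
`min_i λ_i ≥ ((2k−n)(n−1)/((n−2)(k−1))) · C(n,k)^{−1/k} · σ_k(A_Λ)^{1/k}`. -/
theorem min_ge_sigma_k_pow (n k : ℕ) (hn : 3 ≤ n) (hk : 2 ≤ k) (hkn : k ≤ n)
    (h2k : n ≤ 2 * k) (Λ : Fin n → ℝ)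
    (h : ALam n Λ ∈ closure (GammaPlus n k)) :
    ∀ i, (2 * (k : ℝ) - n) * ((n : ℝ) - 1) / (((n : ℝ) - 2) * ((k : ℝ) - 1)) *
        ((n.choose k : ℝ) ^ (-(1 / (k : ℝ)))) *
        (sigmaElem n k (ALam n Λ)) ^ (1 / (k : ℝ)) ≤ Λ i := by
  intro i
  have hsub : closure (GammaPlus n k) ⊆ MinSigma.Kset n k := by
    apply closure_minimal _ (MinSigma.isClosed_Kset n k)
    exact le_trans (MinSigma.gamma_subset_Gset n k (by omega) hkn)
      (MinSigma.Gset_subset_Kset n k hn hk hkn h2k)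
  have hK := hsub h i
  -- now translate : (ALam n Λ) i + σ₁(ALam n Λ)/(n-2) = Λ i
  have hn1 : ((n:ℝ) - 1) ≠ 0 := by
    have : (3:ℝ) ≤ (n:ℝ) := by exact_mod_cast hn
    intro hc; rw [sub_eq_zero] at hc; linarith [hc]
  have hn2 : ((n:ℝ) - 2) ≠ 0 := by
    have : (3:ℝ) ≤ (n:ℝ) := by exact_mod_cast hn
    intro hc; rw [sub_eq_zero] at hc; linarith [hc]
  have hsum : sigmaElem n 1 (ALam n Λ) = (∑ j, Λ j) * ((n:ℝ) - 2) / (2 * ((n:ℝ) - 1)) := by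
    rw [MinSigma.sigmaElem_one_eq_sum]
    unfold ALam
    rw [Finset.sum_sub_distrib, Finset.sum_const, Finset.card_univ, Fintype.card_fin]
    have h2n1 : (2 * ((n:ℝ) - 1)) ≠ 0 := mul_ne_zero two_ne_zero hn1
    rw [nsmul_eq_mul]
    field_simp
    ring
  have htrans : (ALam n Λ) i + sigmaElem n 1 (ALam n Λ) / ((n:ℝ) - 2) = Λ i := by
    rw [hsum]
    unfold ALam
    field_simp
    ring
  rw [htrans] at hK
  exact hK
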